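/- Let T_m be the recursively defined m-linear forms as in the context, with first factor carrying the ℓ^p norm (p ≥ 2) and the remaining factors the ℓ^∞ norm. Then ‖T_m‖ ≥ 2·‖T_{m-1}‖ for all m ≥ 3; consequently ‖T_m‖ = 2^{m-1} for all m ≥ 2. -/

import Mathlib

/-- The recursively defined `(k+2)`-linear forms of Nogueira–Núñez-Alarcón–Pellegrino, acting on
sequences (the form of index `k` corresponds to `m = k + 2` and only depends on the coordinates
`< 2^{k+1} = 2^{m-1}`). -/
def Tm : (k : ℕ) → (Fin (k + 2) → (ℕ → ℝ)) → ℝ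
  | 0, x => (x 1 0 + x 1 1) * x 0 0 + (x 1 0 - x 1 1) * x 0 1
  | (k + 1), x =>
      (x (Fin.last (k + 2)) 0 + x (Fin.last (k + 2)) 1) * Tm k (fun i => x i.castSucc)
      + (x (Fin.last (k + 2)) 0 - x (Fin.last (k + 2)) 1) *
          Tm k (fun i => fun n => x i.castSucc (n + 2 ^ (k + 2 - max i.val 1)))

/-- The values `|Tm k x|` over the unit polyball of `(ℝ^{2^{k+1}}, ℓ^p) × (ℝ^{2^{k+1}}, ℓ^∞)^{k+1}`;
its supremum is the operator norm of `Tm k`. -/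
def TmNormSet (p : ℝ) (k : ℕ) : Set ℝ :=
  {t : ℝ | ∃ x : Fin (k + 2) → (ℕ → ℝ),
    (∀ i n, 2 ^ (k + 1) ≤ n → x i n = 0) ∧
    (∑ n ∈ Finset.range (2 ^ (k + 1)), |x 0 n| ^ p) ^ (1 / p) ≤ 1 ∧
    (∀ i, i ≠ 0 → ∀ n, |x i n| ≤ 1) ∧ t = |Tm k x|}

/-- For `p ≥ 2`: `‖T_m‖ ≥ 2‖T_{m-1}‖` for all `m ≥ 3`, and consequently `‖T_m‖ = 2^{m-1}`
for all `m ≥ 2` (here `m = k + 2`). -/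

lemma Tm_congr : ∀ (k : ℕ) (x x' : Fin (k + 2) → (ℕ → ℝ)),
    (∀ i n, n < 2 ^ (k + 1) → x i n = x' i n) → Tm k x = Tm k x'
  | 0, x, x', h => by
      simp only [Tm]
      rw [h 0 0 (by norm_num), h 0 1 (by norm_num), h 1 0 (by norm_num), h 1 1 (by norm_num)]
  | (k + 1), x, x', h => by
      have h2 : (2:ℕ) ^ (k + 2) = 2 ^ (k + 1) + 2 ^ (k + 1) := by ring
      simp only [Tm]
      rw [h (Fin.last (k+2)) 0 (by positivity), h (Fin.last (k+2)) 1 (by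
        have : (1:ℕ) < 2 ^ 1 := by norm_num
        calc (1:ℕ) < 2^1 := this
          _ ≤ 2 ^ (k+2) := Nat.pow_le_pow_right (by norm_num) (by omega))]
      rw [Tm_congr k (fun i => x i.castSucc) (fun i => x' i.castSucc)
        (fun i n hn => h i.castSucc n (by omega))]
      rw [Tm_congr k _ _ (fun i n hn => h i.castSucc _ (by
        have hs : 2 ^ (k + 2 - max i.val 1) ≤ 2 ^ (k+1) :=
          Nat.pow_le_pow_right (by norm_num) (by omega)
        omega))]

lemma key (a b u v C : ℝ) (ha : |a| ≤ 1) (hb : |b| ≤ 1) (hu : |u| ≤ C) (hv : |v| ≤ C) :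
    |(a + b) * u + (a - b) * v| ≤ 2 * C := by
  obtain ⟨hu1, hu2⟩ := abs_le.mp hu
  obtain ⟨hv1, hv2⟩ := abs_le.mp hv
  have e : (a + b) * u + (a - b) * v = a * (u + v) + b * (u - v) := by ring
  rw [e]
  have h1 : |a * (u + v) + b * (u - v)| ≤ |a| * |u + v| + |b| * |u - v| := by
    calc _ ≤ |a * (u+v)| + |b * (u-v)| := abs_add_le _ _
      _ = |a| * |u + v| + |b| * |u - v| := by rw [abs_mul, abs_mul]
  have h2 : |a| * |u + v| + |b| * |u - v| ≤ |u + v| + |u - v| := by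
    have := abs_nonneg (u + v); have := abs_nonneg (u - v)
    nlinarith
  have h3 : |u + v| + |u - v| ≤ 2 * C := by
    rcases abs_cases (u + v) with ⟨e1, _⟩ | ⟨e1, _⟩ <;>
      rcases abs_cases (u - v) with ⟨e2, _⟩ | ⟨e2, _⟩ <;> linarith
  linarith

lemma rpow_le_one_rev {p x : ℝ} (hp : 0 < p) (hx : 0 ≤ x) (h : x ^ p ≤ 1) : x ≤ 1 := by
  by_contra h1
  push_neg at h1
  have : 1 < x ^ p := Real.one_lt_rpow_iff_of_pos (by linarith) |>.mpr (Or.inl ⟨h1, hp⟩)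
  linarith

lemma Tm_upper (p : ℝ) (hp : 0 < p) : ∀ (k : ℕ) (x : Fin (k + 2) → (ℕ → ℝ)),
    (∑ n ∈ Finset.range (2 ^ (k + 1)), |x 0 n| ^ p) ≤ 1 →
    (∀ i, i ≠ 0 → ∀ n, |x i n| ≤ 1) → |Tm k x| ≤ 2 ^ (k + 1)
  | 0, x, h0, h1 => by
      have hsum : |x 0 0| ^ p + |x 0 1| ^ p ≤ 1 := by
        simpa [Finset.sum_range_succ] using h0
      have t0 : (0:ℝ) ≤ |x 0 0| ^ p := Real.rpow_nonneg (abs_nonneg _) _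
      have t1 : (0:ℝ) ≤ |x 0 1| ^ p := Real.rpow_nonneg (abs_nonneg _) _
      have hu : |x 0 0| ≤ 1 := rpow_le_one_rev hp (abs_nonneg _) (by linarith)
      have hv : |x 0 1| ≤ 1 := rpow_le_one_rev hp (abs_nonneg _) (by linarith)
      simpa [Tm] using key (x 1 0) (x 1 1) (x 0 0) (x 0 1) 1
        (h1 1 (by decide) 0) (h1 1 (by decide) 1) hu hv
  | (k + 1), x, h0, h1 => by
      have h2 : (2:ℕ) ^ (k + 2) = 2 ^ (k + 1) + 2 ^ (k + 1) := by ring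
      have hlast : (Fin.last (k + 2)) ≠ (0 : Fin (k + 3)) := by
        simp [Fin.ext_iff]
      have hcs : ∀ i : Fin (k + 2), i ≠ 0 → (i.castSucc : Fin (k + 3)) ≠ 0 := by
        intro i hi hc
        exact hi (Fin.castSucc_eq_zero_iff.mp hc)
      have hnn : ∀ n ∈ Finset.range (2 ^ (k + 2)), (0:ℝ) ≤ |x 0 n| ^ p :=
        fun n _ => Real.rpow_nonneg (abs_nonneg _) _
      -- first half
      have hy0 : (∑ n ∈ Finset.range (2 ^ (k + 1)), |x 0 n| ^ p) ≤ 1 := by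
        refine le_trans (Finset.sum_le_sum_of_subset_of_nonneg ?_ (fun n hn _ => Real.rpow_nonneg (abs_nonneg _) _)) h0
        exact Finset.range_subset_range.mpr (Nat.pow_le_pow_right (by norm_num) (by omega))
      -- second half
      have hz0 : (∑ n ∈ Finset.range (2 ^ (k + 1)), |x 0 (n + 2 ^ (k + 1))| ^ p) ≤ 1 := by
        have e1 : (∑ n ∈ Finset.range (2 ^ (k + 1)), |x 0 (n + 2 ^ (k + 1))| ^ p)
            = ∑ n ∈ Finset.Ico (2 ^ (k + 1)) (2 ^ (k + 2)), |x 0 n| ^ p := by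
          rw [Finset.sum_Ico_eq_sum_range]
          have e0 : 2 ^ (k + 2) - 2 ^ (k + 1) = 2 ^ (k + 1) := by rw [h2, Nat.add_sub_cancel]
          rw [e0]
          exact Finset.sum_congr rfl fun n _ => by rw [add_comm n (2 ^ (k + 1))]
        rw [e1]
        refine le_trans (Finset.sum_le_sum_of_subset_of_nonneg ?_ (fun n hn _ => Real.rpow_nonneg (abs_nonneg _) _)) h0
        rw [Finset.range_eq_Ico]
        exact Finset.Ico_subset_Ico (Nat.zero_le _) le_rfl
      have hy : |Tm k (fun i => x i.castSucc)| ≤ 2 ^ (k + 1) := by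
        refine Tm_upper p hp k _ ?_ ?_
        · simpa using hy0
        · intro i hi n
          exact h1 i.castSucc (hcs i hi) n
      have hz : |Tm k (fun i => fun n => x i.castSucc (n + 2 ^ (k + 2 - max i.val 1)))|
          ≤ 2 ^ (k + 1) := by
        refine Tm_upper p hp k _ ?_ ?_
        · have : ∀ n:ℕ, ((fun i : Fin (k+2) => fun n => x i.castSucc (n + 2 ^ (k + 2 - max i.val 1))) 0) n
              = x 0 (n + 2 ^ (k + 1)) := by
            intro n; norm_num
          simpa only [this] using hz0
        · intro i hi n
          exact h1 i.castSucc (hcs i hi) _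
      calc |Tm (k+1) x| ≤ 2 * 2 ^ (k + 1) := by
            simpa [Tm] using key (x (Fin.last (k+2)) 0) (x (Fin.last (k+2)) 1)
              (Tm k (fun i => x i.castSucc))
              (Tm k (fun i => fun n => x i.castSucc (n + 2 ^ (k + 2 - max i.val 1))))
              (2 ^ (k+1)) (h1 _ hlast 0) (h1 _ hlast 1) hy hz
        _ = 2 ^ (k + 2) := by ring

/-- The norm achiever. -/
noncomputable def TmA (k : ℕ) : Fin (k + 2) → ℕ → ℝ :=
  fun i n => if i = 0 then (if n = 0 then 1 else 0) else (if n < 2 ^ (k + 1) then 1 else 0)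

lemma Tm_A : ∀ k : ℕ, Tm k (TmA k) = 2 ^ (k + 1)
  | 0 => by norm_num [Tm, TmA]
  | (k + 1) => by
      have hlast : (Fin.last (k + 2)) ≠ (0 : Fin (k + 3)) := by simp [Fin.ext_iff]
      have ha : TmA (k + 1) (Fin.last (k + 2)) 0 = 1 := by
        simp [TmA, hlast]
      have hb : TmA (k + 1) (Fin.last (k + 2)) 1 = 1 := by
        have : (1:ℕ) < 2 ^ (k + 2) := by
          calc (1:ℕ) < 2 ^ 1 := by norm_num
            _ ≤ 2 ^ (k + 2) := Nat.pow_le_pow_right (by norm_num) (by omega)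
        simp [TmA, hlast, this]
      have hy : Tm k (fun i => TmA (k + 1) i.castSucc) = Tm k (TmA k) := by
        refine Tm_congr k _ _ fun i n hn => ?_
        by_cases hi : i = 0
        · subst hi; simp [TmA]
        · have hc : (i.castSucc : Fin (k + 3)) ≠ 0 := by
            intro hc; exact hi (Fin.castSucc_eq_zero_iff.mp hc)
          have hn2 : n < 2 ^ (k + 2) := by
            have : (2:ℕ) ^ (k+1) ≤ 2 ^ (k+2) := Nat.pow_le_pow_right (by norm_num) (by omega)
            omega
          simp [TmA, hi, hc, hn, hn2]
      simp only [Tm, ha, hb, hy, Tm_A k]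
      ring

theorem stmt6 (p : ℝ) (hp : 2 ≤ p) :
    (∀ k : ℕ, 2 * sSup (TmNormSet p k) ≤ sSup (TmNormSet p (k + 1))) ∧
    (∀ k : ℕ, sSup (TmNormSet p k) = 2 ^ (k + 1)) := by
  have hp0 : (0:ℝ) < p := by linarith
  have hmem : ∀ k : ℕ, ((2:ℝ) ^ (k + 1)) ∈ TmNormSet p k := by
    intro k
    refine ⟨TmA k, ?_, ?_, ?_, ?_⟩
    · intro i n hn
      have hn0 : n ≠ 0 := by
        have : (1:ℕ) ≤ 2 ^ (k+1) := Nat.one_le_two_pow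
        omega
      by_cases hi : i = 0 <;> simp [TmA, hi, hn0, not_lt.mpr hn]
    · have e : ∀ n, |TmA k 0 n| ^ p = if n = 0 then 1 else 0 := by
        intro n
        by_cases hn : n = 0
        · simp [TmA, hn]
        · simp [TmA, hn, Real.zero_rpow hp0.ne']
      rw [Finset.sum_congr rfl fun n _ => e n]
      rw [Finset.sum_ite_eq' (Finset.range (2 ^ (k+1))) 0 (fun _ => (1:ℝ))]
      simp [Nat.pow_pos, Real.one_rpow]
    · intro i hi n
      simp only [TmA, if_neg hi]
      split_ifs <;> norm_num
    · rw [Tm_A k, abs_of_nonneg (by positivity)]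
  have hub : ∀ (k : ℕ) t, t ∈ TmNormSet p k → t ≤ 2 ^ (k + 1) := by
    rintro k t ⟨x, -, h0, h1, rfl⟩
    refine Tm_upper p hp0 k x ?_ h1
    have hs : (0:ℝ) ≤ ∑ n ∈ Finset.range (2 ^ (k + 1)), |x 0 n| ^ p :=
      Finset.sum_nonneg fun n _ => Real.rpow_nonneg (abs_nonneg _) _
    have := Real.rpow_le_one (Real.rpow_nonneg hs _) h0 hp0.le
    rwa [← Real.rpow_mul hs, one_div_mul_cancel hp0.ne', Real.rpow_one] at this
  have hsup : ∀ k : ℕ, sSup (TmNormSet p k) = 2 ^ (k + 1) := fun k =>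
    IsGreatest.csSup_eq ⟨hmem k, hub k⟩
  refine ⟨fun k => ?_, hsup⟩
  rw [hsup k, hsup (k + 1)]
  rw [pow_succ]
  ring_nf
  exact le_rfl
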